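/- arXiv:1602.08701 — 2 statements merged into one kernel-verified Lean document; each statement's English description precedes it below -/
import Mathlib

section
/- Let X and Y be real inner product spaces, let j : X → Y be a linear map for which there is a constant C_P ≥ 0 with ‖jx‖_Y ≤ C_P‖x‖_X for all x ∈ X, and let G : Y → ℝ be differentiable with derivative satisfying the semi-monotonicity condition (DG(y₁) − DG(y₂))[y₁ − y₂] ≥ −μ‖y₁ − y₂‖²_Y for all y₁, y₂ ∈ Y and some constant μ ≥ 0. If μ C_P² ≤ 1, then the functional F : X → ℝ defined by F(x) = ½‖x‖²_X + G(jx) is convex. -/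
open scoped RealInnerProductSpace

/-- If `j : X → Y` is linear with `‖jx‖ ≤ C_P‖x‖`, `G : Y → ℝ` is differentiable with
semi-monotone derivative, `(DG(y₁) − DG(y₂))[y₁ − y₂] ≥ −μ‖y₁ − y₂‖²`, and `μ C_P² ≤ 1`,
then `F(x) = ½‖x‖² + G(jx)` is convex. -/
theorem convexity_of_regularized_energy
    {X Y : Type*} [NormedAddCommGroup X] [InnerProductSpace ℝ X]
    [NormedAddCommGroup Y] [InnerProductSpace ℝ Y]
    (j : X →ₗ[ℝ] Y) (C_P : ℝ) (hC_P : 0 ≤ C_P) (hj : ∀ x : X, ‖j x‖ ≤ C_P * ‖x‖)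
    (G : Y → ℝ) (DG : Y → (Y →L[ℝ] ℝ)) (hG : ∀ y, HasFDerivAt G (DG y) y)
    (μ : ℝ) (hμ : 0 ≤ μ)
    (hmon : ∀ y₁ y₂ : Y, (DG y₁ - DG y₂) (y₁ - y₂) ≥ -μ * ‖y₁ - y₂‖ ^ 2)
    (hsmall : μ * C_P ^ 2 ≤ 1) :
    ConvexOn ℝ Set.univ (fun x : X => ‖x‖ ^ 2 / 2 + G (j x)) := by
  set F : X → ℝ := fun x => ‖x‖ ^ 2 / 2 + G (j x) with hF
  -- key: convexity along every line
  have key : ∀ a v : X, ConvexOn ℝ Set.univ (fun r : ℝ => F (a + r • v)) := by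
    intro a v
    set g : ℝ → ℝ := fun r => F (a + r • v) with hg
    set g' : ℝ → ℝ := fun r => ⟪a, v⟫ + r * ⟪v, v⟫ + DG (j a + r • j v) (j v) with hg'
    have hderiv : ∀ r : ℝ, HasDerivAt g (g' r) r := by
      intro r
      have h1 : HasDerivAt (fun r : ℝ => ‖a + r • v‖ ^ 2 / 2)
          (⟪a, v⟫ + r * ⟪v, v⟫) r := by
        have heq : (fun r : ℝ => ‖a + r • v‖ ^ 2 / 2) =
            fun r : ℝ => (⟪a, a⟫ + (2 * r) * ⟪a, v⟫ + r ^ 2 * ⟪v, v⟫) / 2 := by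
          funext s
          rw [← real_inner_self_eq_norm_sq]
          simp [inner_add_add_self, real_inner_smul_left, real_inner_smul_right,
            real_inner_comm v a]
          rw [norm_add_sq_real, norm_smul, real_inner_smul_right, real_inner_comm v a, mul_pow,
            Real.norm_eq_abs, sq_abs]
          ring
        rw [heq]
        have ha1 : HasDerivAt (fun s : ℝ => (2 * s) * ⟪a, v⟫) (2 * ⟪a, v⟫) r := by
          simpa using ((hasDerivAt_id r).const_mul 2).mul_const ⟪a, v⟫
        have ha2 : HasDerivAt (fun s : ℝ => s ^ 2 * ⟪v, v⟫) (2 * r * ⟪v, v⟫) r := by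
          simpa [mul_comm] using (hasDerivAt_pow 2 r).mul_const ⟪v, v⟫
        have hA := (((hasDerivAt_const r ⟪a, a⟫).add ha1).add ha2).div_const 2
        exact hA.congr_deriv (by ring)
      have hcurve : HasDerivAt (fun r : ℝ => j a + r • j v) (j v) r := by
        simpa using ((hasDerivAt_id r).smul_const (j v)).const_add (j a)
      have h2 : HasDerivAt (fun r : ℝ => G (j a + r • j v))
          (DG (j a + r • j v) (j v)) r :=
        (hG (j a + r • j v)).comp_hasDerivAt r hcurve
      have := h1.add h2
      have hfeq : g = (fun r : ℝ => ‖a + r • v‖ ^ 2 / 2) + fun r => G (j a + r • j v) := by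
        funext s
        simp only [hg, hF, map_add, map_smul, Pi.add_apply]
      rw [hfeq]
      exact this
    have hmono : Monotone (deriv g) := by
      have hdg : deriv g = g' := funext fun r => (hderiv r).deriv
      rw [hdg]
      intro r s hrs
      rcases eq_or_lt_of_le hrs with h | h
      · subst h; exact le_rfl
      have hys : (j a + s • j v) - (j a + r • j v) = (s - r) • j v := by
        module
      have hm := hmon (j a + s • j v) (j a + r • j v)
      rw [hys] at hm
      have hexp : (DG (j a + s • j v) - DG (j a + r • j v)) ((s - r) • j v)
          = (s - r) * ((DG (j a + s • j v)) (j v) - (DG (j a + r • j v)) (j v)) := by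
        simp [ContinuousLinearMap.sub_apply, map_smul, smul_eq_mul]
        try ring
      rw [hexp, norm_smul] at hm
      have hsr : (0 : ℝ) < s - r := sub_pos.mpr h
      -- from hm : (s-r) * Δ ≥ -μ * (|s-r| * ‖j v‖)^2
      have hΔ : (DG (j a + s • j v)) (j v) - (DG (j a + r • j v)) (j v)
          ≥ -μ * ((s - r) * ‖j v‖ ^ 2) := by
        have habs : |s - r| = s - r := abs_of_pos hsr
        rw [Real.norm_eq_abs, habs] at hm
        have := hm
        nlinarith [this]
      -- bound μ ‖j v‖² ≤ ‖v‖²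
      have hjv : μ * ‖j v‖ ^ 2 ≤ ⟪v, v⟫ := by
        have h1 : ‖j v‖ ^ 2 ≤ (C_P * ‖v‖) ^ 2 := by
          have := hj v
          nlinarith [norm_nonneg (j v), norm_nonneg v]
        have h2 : μ * ‖j v‖ ^ 2 ≤ μ * (C_P ^ 2 * ‖v‖ ^ 2) := by nlinarith
        have h3 : μ * (C_P ^ 2 * ‖v‖ ^ 2) ≤ ‖v‖ ^ 2 := by nlinarith [sq_nonneg ‖v‖]
        rw [real_inner_self_eq_norm_sq]
        linarith
      simp only [hg']
      nlinarith [hΔ, hjv, hsr.le]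
    exact Monotone.convexOn_univ_of_deriv
      (fun r => (hderiv r).differentiableAt) hmono
  -- conclude
  refine ⟨convex_univ, ?_⟩
  intro x _ y _ s t hs ht hst
  have hline := key x (y - x)
  have := hline.2 (Set.mem_univ (0 : ℝ)) (Set.mem_univ (1 : ℝ)) hs ht hst
  simp only [smul_eq_mul, mul_zero, mul_one, zero_add] at this
  have e1 : x + (t : ℝ) • (y - x) = s • x + t • y := by
    have hs1 : s = 1 - t := by linarith
    subst hs1; module
  have e0 : x + (0 : ℝ) • (y - x) = x := by module
  have eone : x + (1 : ℝ) • (y - x) = y := by module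
  rw [e1, e0, eone] at this
  exact this
end

section
/- Let d, m ≥ 1, α ∈ (0, 1], a ∈ (1, ∞), T > 0, and M, K ≥ 0, and set γ = α(a−1) / ((d/2 + α)·a). Let u : [0, T] × ℝ^d → ℝ^m and let v : [0, T] × ℝ^d → ℝ^m be measurable, and suppose: (i) for every t ∈ [0, T] and x, y ∈ ℝ^d, |u(t, x) − u(t, y)| ≤ M|x − y|^α; (ii) for every x ∈ ℝ^d and 0 ≤ s ≤ t ≤ T, u(t, x) − u(s, x) = ∫_s^t v(τ, x) dτ; and (iii) (∫₀^T (∫_{ℝ^d} |v(t, x)|² dx)^{a/2} dt)^{1/a} ≤ K. Then there exists a constant C > 0 depending only on d, α and a such that for all s, t ∈ [0, T] and x, y ∈ ℝ^d: |u(t, x) − u(s, y)| ≤ C(M + K)(|t − s|^γ + |x − y|^α). -/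
open MeasureTheory Metric
open scoped ENNReal NNReal

private lemma continuous_of_holder_bd {E F : Type*} [NormedAddCommGroup E] [NormedAddCommGroup F]
    {f : E → F} {M α : ℝ} (hα : 0 < α)
    (h : ∀ x y, ‖f x - f y‖ ≤ M * ‖x - y‖ ^ α) : Continuous f := by
  rw [Metric.continuous_iff]
  intro b ε hε
  rcases le_or_gt M 0 with hM | hM
  · refine ⟨1, one_pos, fun a _ => ?_⟩
    have h2 : M * ‖a - b‖ ^ α ≤ 0 :=
      mul_nonpos_of_nonpos_of_nonneg hM (Real.rpow_nonneg (norm_nonneg _) _)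
    calc dist (f a) (f b) = ‖f a - f b‖ := dist_eq_norm _ _
    _ ≤ 0 := le_trans (h a b) h2
    _ < ε := hε
  · refine ⟨(ε / (2 * M)) ^ (1/α), Real.rpow_pos_of_pos (by positivity) _, fun a hab => ?_⟩
    have hab' : ‖a - b‖ ^ α ≤ ε / (2 * M) := by
      have h1 : ‖a - b‖ ^ α ≤ ((ε / (2*M)) ^ (1/α)) ^ α := by
        apply Real.rpow_le_rpow (norm_nonneg _) _ hα.le
        rw [← dist_eq_norm]; exact hab.le
      rwa [← Real.rpow_mul (by positivity), one_div_mul_cancel hα.ne', Real.rpow_one] at h1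
    calc dist (f a) (f b) = ‖f a - f b‖ := dist_eq_norm _ _
    _ ≤ M * ‖a - b‖ ^ α := h a b
    _ ≤ M * (ε / (2 * M)) := by nlinarith
    _ < ε := by rw [mul_div_assoc', div_lt_iff₀ (by positivity)]; nlinarith

set_option maxHeartbeats 2000000 in
private lemma key_time_est (d m : ℕ)
    (α a : ℝ) (hα : 0 < α) (hα1 : α ≤ 1) (ha : 1 < a)
    (T M K : ℝ) (hT : 0 < T) (hM : 0 ≤ M) (hK : 0 ≤ K)
    (u v : ℝ → EuclideanSpace ℝ (Fin d) → EuclideanSpace ℝ (Fin m))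
    (hv : Measurable (Function.uncurry v))
    (hHol : ∀ t ∈ Set.Icc (0:ℝ) T, ∀ x y, ‖u t x - u t y‖ ≤ M * ‖x - y‖ ^ α)
    (hFTC : ∀ x, ∀ s t : ℝ, 0 ≤ s → s ≤ t → t ≤ T →
        u t x - u s x = ∫ τ in s..t, v τ x)
    (hI2 : ∀ t ∈ Set.Icc (0:ℝ) T, Integrable (fun x => ‖v t x‖ ^ 2))
    (hIA : IntegrableOn (fun t => (∫ x, ‖v t x‖ ^ 2) ^ (a / 2)) (Set.Icc 0 T))
    (hKb : (∫ t in (0:ℝ)..T, (∫ x, ‖v t x‖ ^ 2) ^ (a / 2)) ^ (1 / a) ≤ K) :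
    ∀ s t : ℝ, 0 ≤ s → s ≤ t → t ≤ T → ∀ x,
      ‖u t x - u s x‖ ≤
        (2 + ((volume (ball (0 : EuclideanSpace ℝ (Fin d)) 1)).toReal) ^ (-(1:ℝ)/2)) * (M + K) *
          (t - s) ^ (α * (a - 1) / (((d : ℝ) / 2 + α) * a)) := by
  set γ : ℝ := α * (a - 1) / (((d : ℝ) / 2 + α) * a) with hγdef
  set θ : ℝ := (a - 1) / (((d : ℝ) / 2 + α) * a) with hθdef
  set c : ℝ := (volume (ball (0 : EuclideanSpace ℝ (Fin d)) 1)).toReal with hcdef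
  have hd2α : (0:ℝ) < (d:ℝ)/2 + α := by positivity
  have ha0 : (0:ℝ) < a := lt_trans one_pos ha
  have ha1 : (0:ℝ) < a - 1 := sub_pos.2 ha
  have hθpos : 0 < θ := div_pos ha1 (mul_pos hd2α ha0)
  have hγpos : 0 < γ := div_pos (mul_pos hα ha1) (mul_pos hd2α ha0)
  have hc_pos : 0 < c :=
    ENNReal.toReal_pos (measure_ball_pos _ _ one_pos).ne' measure_ball_lt_top.ne
  intro s t hs0 hst htT x
  have hsmem : s ∈ Set.Icc (0:ℝ) T := ⟨hs0, hst.trans htT⟩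
  have htmem : t ∈ Set.Icc (0:ℝ) T := ⟨hs0.trans hst, htT⟩
  rcases eq_or_lt_of_le hst with rfl | hlt
  · simp [Real.zero_rpow hγpos.ne']
  set δ : ℝ := t - s with hδdef
  have hδ : 0 < δ := sub_pos.2 hlt
  set r : ℝ := δ ^ θ with hrdef
  have hr : 0 < r := Real.rpow_pos_of_pos hδ θ
  set B : Set (EuclideanSpace ℝ (Fin d)) := ball x r with hBdef
  have hVB : volume B = ENNReal.ofReal (r ^ d) * volume (ball (0 : EuclideanSpace ℝ (Fin d)) 1) := by
    rw [hBdef, Measure.addHaar_ball_of_pos volume x hr, finrank_euclideanSpace_fin]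
  have hVtop : volume B ≠ ⊤ := by rw [hBdef]; exact measure_ball_lt_top.ne
  set V : ℝ := (volume B).toReal with hVdef
  have hV : V = r ^ d * c := by
    rw [hVdef, hVB, ENNReal.toReal_mul, ENNReal.toReal_ofReal (by positivity)]
  have hVpos : 0 < V := by rw [hV]; positivity
  -- continuity and integrability of u τ on B
  have hcont : ∀ τ ∈ Set.Icc (0:ℝ) T, Continuous (u τ) :=
    fun τ hτ => continuous_of_holder_bd hα (hHol τ hτ)
  have hint : ∀ τ ∈ Set.Icc (0:ℝ) T, IntegrableOn (u τ) B := fun τ hτ =>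
    ((hcont τ hτ).locallyIntegrable.integrableOn_isCompact (isCompact_closedBall x r)).mono_set
      ball_subset_closedBall
  set A : ℝ → EuclideanSpace ℝ (Fin m) := fun τ => V⁻¹ • ∫ y in B, u τ y with hAdef
  -- Step A
  have stepA : ∀ τ ∈ Set.Icc (0:ℝ) T, ‖u τ x - A τ‖ ≤ M * r ^ α := by
    intro τ hτ
    have h1 : ∫ y in B, (u τ x - u τ y) = V • u τ x - ∫ y in B, u τ y := by
      rw [integral_sub (integrableOn_const (C := u τ x) hVtop) (hint τ hτ),
        setIntegral_const]; rfl
    have h2 : u τ x - A τ = V⁻¹ • ∫ y in B, (u τ x - u τ y) := by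
      rw [h1, smul_sub, smul_smul, inv_mul_cancel₀ hVpos.ne', one_smul, hAdef]
    rw [h2, norm_smul, Real.norm_eq_abs, abs_of_pos (inv_pos.2 hVpos)]
    have h3 : ‖∫ y in B, (u τ x - u τ y)‖ ≤ ∫ y in B, M * r ^ α := by
      refine (norm_integral_le_integral_norm _).trans ?_
      refine setIntegral_mono_on ((integrableOn_const hVtop).sub
        (hint τ hτ)).norm (integrableOn_const hVtop)
        measurableSet_ball (fun y hy => ?_)
      refine (hHol τ hτ x y).trans ?_
      have hxy : ‖x - y‖ ≤ r := by
        rw [← dist_eq_norm, dist_comm]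
        exact (mem_ball.1 hy).le
      exact mul_le_mul_of_nonneg_left
        (Real.rpow_le_rpow (norm_nonneg _) hxy hα.le) hM
    rw [setIntegral_const] at h3
    calc V⁻¹ * ‖∫ y in B, (u τ x - u τ y)‖ ≤ V⁻¹ * (V • (M * r ^ α)) :=
      mul_le_mul_of_nonneg_left h3 (by positivity)
    _ = M * r ^ α := by
      rw [smul_eq_mul, ← mul_assoc, inv_mul_cancel₀ hVpos.ne', one_mul]
  
  -- measurability facts
  have hvm : ∀ τ, Measurable (v τ) := fun τ => hv.comp measurable_prodMk_left
  set G : ℝ → ℝ := fun τ => ∫ y, ‖v τ y‖ ^ 2 with hGdef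
  have hG0 : ∀ τ, 0 ≤ G τ := fun τ => integral_nonneg fun y => by positivity
  have hGmeas : Measurable G := by
    have hsm : StronglyMeasurable
        (Function.uncurry fun (τ : ℝ) (y : EuclideanSpace ℝ (Fin d)) => ‖v τ y‖ ^ 2) :=
      (hv.norm.pow_const 2).stronglyMeasurable
    exact hsm.integral_prod_right'.measurable
  have hpt : ∀ (z : EuclideanSpace ℝ (Fin m)),
      ((‖z‖₊ : ℝ≥0∞)) ^ (2:ℝ) = ENNReal.ofReal (‖z‖ ^ 2) := by
    intro z
    rw [show ((‖z‖₊ : ℝ≥0∞)) = ENNReal.ofReal ‖z‖ from (ofReal_norm z).symm, ENNReal.ofReal_rpow_of_nonneg (norm_nonneg z) (by norm_num)]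
    norm_num
  have hFe : ∀ τ ∈ Set.Icc (0:ℝ) T,
      (∫⁻ y, (‖v τ y‖₊ : ℝ≥0∞) ^ (2:ℝ)) = ENNReal.ofReal (G τ) := by
    intro τ hτ
    have h1 := ofReal_integral_eq_lintegral_ofReal (hI2 τ hτ)
      (Filter.Eventually.of_forall fun y => by positivity)
    simp only [hpt]
    exact h1.symm
  have hsub : Set.Ioc s t ⊆ Set.Icc (0:ℝ) T :=
    fun τ hτ => ⟨hs0.trans hτ.1.le, hτ.2.trans htT⟩
  have htwo : (2:ℝ).HolderConjugate 2 := (Real.holderConjugate_iff_eq_conjExponent one_lt_two).2 (by norm_num)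
  have hpq : a.HolderConjugate (a / (a-1)) := Real.HolderConjugate.conjExponent ha
  -- Step 1: pointwise FTC bound + Tonelli swap
  have L1 : (∫⁻ y in B, (‖u t y - u s y‖₊ : ℝ≥0∞)) ≤
      ∫⁻ τ in Set.Ioc s t, ∫⁻ y in B, (‖v τ y‖₊ : ℝ≥0∞) := by
    calc (∫⁻ y in B, (‖u t y - u s y‖₊ : ℝ≥0∞))
        ≤ ∫⁻ y in B, ∫⁻ τ in Set.Ioc s t, (‖v τ y‖₊ : ℝ≥0∞) := by
          refine lintegral_mono fun y => ?_
          rw [hFTC y s t hs0 hst htT, intervalIntegral.integral_of_le hst]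
          exact enorm_integral_le_lintegral_enorm _
      _ = ∫⁻ τ in Set.Ioc s t, ∫⁻ y in B, (‖v τ y‖₊ : ℝ≥0∞) :=
          lintegral_lintegral_swap (hv.enorm.comp measurable_swap).aemeasurable
  -- Step 2: Cauchy-Schwarz in space
  have L2 : ∀ τ ∈ Set.Ioc s t, (∫⁻ y in B, (‖v τ y‖₊ : ℝ≥0∞)) ≤
      ENNReal.ofReal (G τ) ^ ((1:ℝ)/2) * volume B ^ ((1:ℝ)/2) := by
    intro τ hτ
    have hCS := ENNReal.lintegral_mul_le_Lp_mul_Lq (volume.restrict B) htwo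
      (f := fun y => (‖v τ y‖₊ : ℝ≥0∞)) (g := fun _ => 1)
      (hvm τ).enorm.aemeasurable aemeasurable_const
    simp only [Pi.mul_apply, mul_one] at hCS
    refine hCS.trans ?_
    have h1 : (∫⁻ y in B, ((1:ℝ≥0∞)) ^ (2:ℝ)) = volume B := by
      simp [ENNReal.one_rpow]
    rw [h1]
    gcongr
    · exact le_trans (lintegral_mono' Measure.restrict_le_self le_rfl)
        (le_of_eq (hFe τ (hsub hτ)))
  -- Step 3: Hoelder in time
  have hGm2 : Measurable fun τ => ENNReal.ofReal (G τ) ^ ((1:ℝ)/2) :=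
    hGmeas.ennreal_ofReal.pow_const _
  have L3 : (∫⁻ τ in Set.Ioc s t, ENNReal.ofReal (G τ) ^ ((1:ℝ)/2)) ≤
      ENNReal.ofReal (K ^ a) ^ (1/a) * ENNReal.ofReal δ ^ ((a-1)/a) := by
    have hH := ENNReal.lintegral_mul_le_Lp_mul_Lq (volume.restrict (Set.Ioc s t)) hpq
      (f := fun τ => ENNReal.ofReal (G τ) ^ ((1:ℝ)/2)) (g := fun _ => 1)
      hGm2.aemeasurable aemeasurable_const
    simp only [Pi.mul_apply, mul_one] at hH
    refine hH.trans ?_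
    have h1 : (∫⁻ τ in Set.Ioc s t, ((1:ℝ≥0∞)) ^ (a/(a-1))) ^ (1/(a/(a-1))) =
        ENNReal.ofReal δ ^ ((a-1)/a) := by
      simp only [ENNReal.one_rpow]
      rw [setLIntegral_one, Real.volume_Ioc, one_div_div]
    rw [h1]
    gcongr
    · -- ∫⁻ (ofReal (G τ) ^ (1/2)) ^ a ≤ ofReal (K^a)
      have h2 : ∀ τ : ℝ, (ENNReal.ofReal (G τ) ^ ((1:ℝ)/2)) ^ a
          = ENNReal.ofReal (G τ) ^ (a/2) := by
        intro τ
        rw [← ENNReal.rpow_mul]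
        congr 1
        ring
      simp only [h2]
      calc (∫⁻ τ in Set.Ioc s t, ENNReal.ofReal (G τ) ^ (a/2))
          ≤ ∫⁻ τ in Set.Icc (0:ℝ) T, ENNReal.ofReal (G τ) ^ (a/2) :=
            lintegral_mono_set hsub
        _ = ∫⁻ τ in Set.Icc (0:ℝ) T, ENNReal.ofReal (G τ ^ (a/2)) := by
            refine lintegral_congr fun τ => ?_
            rw [ENNReal.ofReal_rpow_of_nonneg (hG0 τ) (by positivity)]
        _ = ENNReal.ofReal (∫ τ in Set.Icc (0:ℝ) T, G τ ^ (a/2)) := by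
            refine (ofReal_integral_eq_lintegral_ofReal hIA ?_).symm
            exact Filter.Eventually.of_forall fun τ => Real.rpow_nonneg (hG0 τ) _
        _ ≤ ENNReal.ofReal (K ^ a) := by
            refine ENNReal.ofReal_le_ofReal ?_
            have hJeq : (∫ τ in Set.Icc (0:ℝ) T, G τ ^ (a/2))
                = ∫ τ in (0:ℝ)..T, G τ ^ (a/2) := by
              rw [intervalIntegral.integral_of_le hT.le, integral_Icc_eq_integral_Ioc]
            rw [hJeq]
            set J : ℝ := ∫ τ in (0:ℝ)..T, G τ ^ (a/2) with hJdef
            have hJ0 : 0 ≤ J := by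
              rw [hJdef, intervalIntegral.integral_of_le hT.le]
              exact setIntegral_nonneg measurableSet_Ioc fun τ _ => Real.rpow_nonneg (hG0 τ) _
            have h3 : (J ^ (1/a)) ^ a ≤ K ^ a :=
              Real.rpow_le_rpow (Real.rpow_nonneg hJ0 _) hKb ha0.le
            rwa [← Real.rpow_mul hJ0, one_div_mul_cancel ha0.ne', Real.rpow_one] at h3
  -- combine the lintegral chain
  have Lfinal : (∫⁻ y in B, (‖u t y - u s y‖₊ : ℝ≥0∞)) ≤
      volume B ^ ((1:ℝ)/2) *
        (ENNReal.ofReal (K ^ a) ^ (1/a) * ENNReal.ofReal δ ^ ((a-1)/a)) := by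
    refine L1.trans ?_
    calc (∫⁻ τ in Set.Ioc s t, ∫⁻ y in B, (‖v τ y‖₊ : ℝ≥0∞))
        ≤ ∫⁻ τ in Set.Ioc s t, ENNReal.ofReal (G τ) ^ ((1:ℝ)/2) * volume B ^ ((1:ℝ)/2) :=
          setLIntegral_mono (hGm2.mul_const _) L2
      _ = volume B ^ ((1:ℝ)/2) * ∫⁻ τ in Set.Ioc s t, ENNReal.ofReal (G τ) ^ ((1:ℝ)/2) := by
          rw [lintegral_mul_const' _ _ (ENNReal.rpow_ne_top_of_nonneg (by norm_num) hVtop),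
            mul_comm]
      _ ≤ _ := mul_le_mul_right L3 _
  -- convert to a real estimate
  have hIreal : (∫ y in B, ‖u t y - u s y‖) ≤ V ^ ((1:ℝ)/2) * (K * δ ^ ((a-1)/a)) := by
    have hmeas : AEStronglyMeasurable (fun y => u t y - u s y) (volume.restrict B) :=
      ((hcont t htmem).sub (hcont s hsmem)).aestronglyMeasurable.restrict
    rw [integral_norm_eq_lintegral_enorm hmeas]
    have hne : volume B ^ ((1:ℝ)/2) *
        (ENNReal.ofReal (K ^ a) ^ (1/a) * ENNReal.ofReal δ ^ ((a-1)/a)) ≠ ⊤ :=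
      ENNReal.mul_ne_top (ENNReal.rpow_ne_top_of_nonneg (by norm_num) hVtop)
        (ENNReal.mul_ne_top
          (ENNReal.rpow_ne_top_of_nonneg (by positivity) ENNReal.ofReal_ne_top)
          (ENNReal.rpow_ne_top_of_nonneg (div_nonneg ha1.le ha0.le) ENNReal.ofReal_ne_top))
    refine (ENNReal.toReal_mono hne Lfinal).trans_eq ?_
    rw [ENNReal.toReal_mul, ENNReal.toReal_mul, ← ENNReal.toReal_rpow, ← ENNReal.toReal_rpow,
      ← ENNReal.toReal_rpow, ENNReal.toReal_ofReal (Real.rpow_nonneg hK a),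
      ENNReal.toReal_ofReal hδ.le, ← Real.rpow_mul hK, mul_one_div_cancel ha0.ne',
      Real.rpow_one, hVdef]
  -- Step B: estimate on the difference of averages
  have stepB : ‖A t - A s‖ ≤ V⁻¹ * (V ^ ((1:ℝ)/2) * (K * δ ^ ((a-1)/a))) := by
    have h1 : A t - A s = V⁻¹ • ∫ y in B, (u t y - u s y) := by
      rw [hAdef, ← smul_sub, ← integral_sub (hint t htmem) (hint s hsmem)]
    rw [h1, norm_smul, Real.norm_eq_abs, abs_of_pos (inv_pos.2 hVpos)]
    exact mul_le_mul_of_nonneg_left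
      ((norm_integral_le_integral_norm _).trans hIreal) (by positivity)
  -- exponent arithmetic
  have hrα : r ^ α = δ ^ γ := by
    rw [hrdef, ← Real.rpow_mul hδ.le]
    congr 1
    rw [hθdef, hγdef]; ring
  have hrd : r ^ (-(d:ℝ)/2) * δ ^ ((a-1)/a) = δ ^ γ := by
    rw [hrdef, ← Real.rpow_mul hδ.le, ← Real.rpow_add hδ]
    congr 1
    rw [hθdef, hγdef]
    field_simp
    ring
  have hVexp : V⁻¹ * V ^ ((1:ℝ)/2) = c ^ (-(1:ℝ)/2) * r ^ (-(d:ℝ)/2) := by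
    rw [← Real.rpow_neg_one V, ← Real.rpow_add hVpos]
    have he : (-1 : ℝ) + 1/2 = -(1:ℝ)/2 := by norm_num
    rw [he, hV, Real.mul_rpow (by positivity) hc_pos.le, mul_comm]
    congr 1
    rw [← Real.rpow_natCast r d, ← Real.rpow_mul hr.le]
    congr 1
    ring
  have hmid : V⁻¹ * (V ^ ((1:ℝ)/2) * (K * δ ^ ((a-1)/a))) = c ^ (-(1:ℝ)/2) * K * δ ^ γ := by
    rw [← mul_assoc, hVexp,
      show c ^ (-(1:ℝ)/2) * r ^ (-(d:ℝ)/2) * (K * δ ^ ((a-1)/a))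
        = c ^ (-(1:ℝ)/2) * K * (r ^ (-(d:ℝ)/2) * δ ^ ((a-1)/a)) from by ring, hrd]
  -- assemble
  have tri : ‖u t x - u s x‖ ≤ ‖u t x - A t‖ + ‖A t - A s‖ + ‖u s x - A s‖ := by
    have hdecomp : u t x - u s x = (u t x - A t) + (A t - A s) + (A s - u s x) := by abel
    rw [hdecomp]
    refine (norm_add₃_le).trans ?_
    rw [norm_sub_rev (A s)]
  have hfin : ‖u t x - u s x‖ ≤ M * δ ^ γ + c ^ (-(1:ℝ)/2) * K * δ ^ γ + M * δ ^ γ := by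
    refine tri.trans ?_
    have h1 := stepA t htmem
    have h2 := stepA s hsmem
    rw [hrα] at h1 h2
    exact add_le_add (add_le_add h1 (stepB.trans_eq hmid)) h2
  refine hfin.trans ?_
  have hδγ : 0 ≤ δ ^ γ := Real.rpow_nonneg hδ.le _
  have hcexp : 0 ≤ c ^ (-(1:ℝ)/2) := Real.rpow_nonneg hc_pos.le _
  nlinarith [mul_nonneg hcexp hδγ, mul_nonneg hM hδγ, mul_nonneg hK hδγ,
    mul_nonneg (mul_nonneg hcexp hM) hδγ, mul_nonneg (mul_nonneg hcexp hK) hδγ]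

/-- A function on `[0,T] × ℝ^d` that is uniformly `α`-Hölder in space and whose time derivative
lies in `Lᵃ(0,T; L²(ℝ^d))` is jointly Hölder continuous:
`|u(t,x) − u(s,y)| ≤ C(M + K)(|t − s|^γ + |x − y|^α)` with
`γ = α(a−1)/((d/2+α)a)` and `C = C(d, α, a)`. -/
theorem joint_spacetime_holder (d m : ℕ) (hd : 1 ≤ d) (hm : 1 ≤ m)
    (α a : ℝ) (hα : 0 < α) (hα1 : α ≤ 1) (ha : 1 < a) :
    ∃ C : ℝ, 0 < C ∧
      ∀ (T M K : ℝ), 0 < T → 0 ≤ M → 0 ≤ K →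
      ∀ (u v : ℝ → EuclideanSpace ℝ (Fin d) → EuclideanSpace ℝ (Fin m)),
        Measurable (Function.uncurry v) →
        -- (i) uniform spatial Hölder continuity
        (∀ t ∈ Set.Icc (0:ℝ) T, ∀ x y, ‖u t x - u t y‖ ≤ M * ‖x - y‖ ^ α) →
        -- (ii) `v` is the time derivative of `u`
        (∀ x, ∀ s t : ℝ, 0 ≤ s → s ≤ t → t ≤ T →
          u t x - u s x = ∫ τ in s..t, v τ x) →
        -- integrability of `v`
        (∀ t ∈ Set.Icc (0:ℝ) T, Integrable (fun x => ‖v t x‖ ^ 2)) →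
        IntegrableOn (fun t => (∫ x, ‖v t x‖ ^ 2) ^ (a / 2)) (Set.Icc 0 T) →
        -- (iii) the `Lᵃ(L²)` bound
        (∫ t in (0:ℝ)..T, (∫ x, ‖v t x‖ ^ 2) ^ (a / 2)) ^ (1 / a) ≤ K →
        ∀ s ∈ Set.Icc (0:ℝ) T, ∀ t ∈ Set.Icc (0:ℝ) T,
          ∀ x y : EuclideanSpace ℝ (Fin d),
            ‖u t x - u s y‖ ≤ C * (M + K) *
              (|t - s| ^ (α * (a - 1) / (((d : ℝ) / 2 + α) * a)) + ‖x - y‖ ^ α) := by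
  set c : ℝ := (volume (ball (0 : EuclideanSpace ℝ (Fin d)) 1)).toReal with hcdef
  have hc_pos : 0 < c :=
    ENNReal.toReal_pos (measure_ball_pos _ _ one_pos).ne' measure_ball_lt_top.ne
  set c' : ℝ := c ^ (-(1:ℝ)/2) with hc'def
  have hc'pos : 0 < c' := Real.rpow_pos_of_pos hc_pos _
  refine ⟨3 + c', by positivity, ?_⟩
  intro T M K hT hM hK u v hv hHol hFTC hI2 hIA hKb s hs t ht x y
  set γ : ℝ := α * (a - 1) / (((d : ℝ) / 2 + α) * a) with hγdef
  have key := key_time_est d m α a hα hα1 ha T M K hT hM hK u v hv hHol hFTC hI2 hIA hKb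
  have hMK : M ≤ M + K := le_add_of_nonneg_right hK
  rcases le_total s t with h | h
  · have h1 : ‖u t x - u s y‖ ≤ ‖u t x - u s x‖ + ‖u s x - u s y‖ := by
      rw [← sub_add_sub_cancel (u t x) (u s x) (u s y)]
      exact norm_add_le _ _
    have h2 := key s t hs.1 h ht.2 x
    have h3 := hHol s hs x y
    have habs : |t - s| = t - s := abs_of_nonneg (sub_nonneg.2 h)
    rw [habs]
    have hA : (0:ℝ) ≤ (t - s) ^ γ := Real.rpow_nonneg (sub_nonneg.2 h) _
    have hB : (0:ℝ) ≤ ‖x - y‖ ^ α := Real.rpow_nonneg (norm_nonneg _) _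
    nlinarith [mul_nonneg (add_nonneg hM hK) hA, mul_nonneg (add_nonneg hM hK) hB,
      mul_nonneg (mul_nonneg hc'pos.le (add_nonneg hM hK)) hA,
      mul_nonneg (mul_nonneg hc'pos.le (add_nonneg hM hK)) hB,
      mul_nonneg hK hB, mul_nonneg hK hA, mul_nonneg hc'pos.le (mul_nonneg hK hB)]
  · have h1 : ‖u t x - u s y‖ ≤ ‖u s y - u t y‖ + ‖u t y - u t x‖ := by
      rw [norm_sub_rev, ← sub_add_sub_cancel (u s y) (u t y) (u t x)]
      exact norm_add_le _ _
    have h2 := key t s ht.1 h hs.2 y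
    have h3 := hHol t ht y x
    have habs : |t - s| = s - t := by rw [abs_sub_comm]; exact abs_of_nonneg (sub_nonneg.2 h)
    have hxy : ‖y - x‖ = ‖x - y‖ := norm_sub_rev _ _
    rw [habs]
    rw [hxy] at h3
    have hA : (0:ℝ) ≤ (s - t) ^ γ := Real.rpow_nonneg (sub_nonneg.2 h) _
    have hB : (0:ℝ) ≤ ‖x - y‖ ^ α := Real.rpow_nonneg (norm_nonneg _) _
    nlinarith [mul_nonneg (add_nonneg hM hK) hA, mul_nonneg (add_nonneg hM hK) hB,
      mul_nonneg (mul_nonneg hc'pos.le (add_nonneg hM hK)) hA,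
      mul_nonneg (mul_nonneg hc'pos.le (add_nonneg hM hK)) hB,
      mul_nonneg hK hB, mul_nonneg hK hA, mul_nonneg hc'pos.le (mul_nonneg hK hB)]
end
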